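/- For all nonempty metric spaces X and Y, the quasi-isometric distance and the Gromov–Hausdorff distance satisfy d̂(X,Y) ≤ 4·d_GH(X,Y), where both sides are taken in [0, ∞]. -/
import Mathlib


open ENNReal

/-- `f` is an `(A,B)`-quasi-isometric embedding. -/
def QIEmb {X Y : Type*} [MetricSpace X] [MetricSpace Y] (A B : ℝ) (f : X → Y) : Prop :=
  ∀ x x' : X, (1 / A) * dist x x' - B ≤ dist (f x) (f x') ∧
    dist (f x) (f x') ≤ A * dist x x' + B

/-- `X` and `Y` are `(A,B,C)`-quasi-isometric. -/
def QuasiIsometric (X Y : Type*) [MetricSpace X] [MetricSpace Y] (A B C : ℝ) : Prop :=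
  ∃ (f : X → Y) (g : Y → X), QIEmb A B f ∧ QIEmb A B g ∧
    (∀ x : X, dist (g (f x)) x ≤ C) ∧ (∀ y : Y, dist (f (g y)) y ≤ C)

/-- The quasi-isometric distance `d̂`. -/
noncomputable def qiDist (X Y : Type*) [MetricSpace X] [MetricSpace Y] : ℝ≥0∞ :=
  sInf {e : ℝ≥0∞ | ∃ r : ℝ, 0 < r ∧ e = ENNReal.ofReal r ∧ QuasiIsometric X Y (1 + r) r r}

/-- A correspondence between `X` and `Y`: both projections are surjective. -/
def IsCorrespondence {X Y : Type*} (R : Set (X × Y)) : Prop :=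
  (∀ x : X, ∃ y : Y, (x, y) ∈ R) ∧ (∀ y : Y, ∃ x : X, (x, y) ∈ R)

/-- The distortion of a correspondence, in `[0,∞]`. -/
noncomputable def corDis {X Y : Type*} [MetricSpace X] [MetricSpace Y]
    (R : Set (X × Y)) : ℝ≥0∞ :=
  ⨆ p ∈ R, ⨆ q ∈ R, ENNReal.ofReal |dist p.1 q.1 - dist p.2 q.2|

/-- The Gromov–Hausdorff distance of arbitrary metric spaces, in `[0,∞]`. -/
noncomputable def ghDist (X Y : Type*) [MetricSpace X] [MetricSpace Y] : ℝ≥0∞ :=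
  (1 / 2) * ⨅ R : {R : Set (X × Y) // IsCorrespondence R}, corDis R.1

lemma corDis_bound {X Y : Type*} [MetricSpace X] [MetricSpace Y]
    {R : Set (X × Y)} {r : ℝ} (hr : 0 ≤ r) (h : corDis R ≤ ENNReal.ofReal r)
    {x x' : X} {y y' : Y} (hxy : (x, y) ∈ R) (hxy' : (x', y') ∈ R) :
    |dist x x' - dist y y'| ≤ r := by
  have h1 : ENNReal.ofReal |dist x x' - dist y y'| ≤ corDis R := by
    have := le_iSup₂ (f := fun (q : X × Y) (_ : q ∈ R) =>
      ENNReal.ofReal |dist (x, y).1 q.1 - dist (x, y).2 q.2|) (x', y') hxy'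
    exact this.trans (le_iSup₂ (f := fun (p : X × Y) (_ : p ∈ R) =>
      ⨆ q ∈ R, ENNReal.ofReal |dist p.1 q.1 - dist p.2 q.2|) (x, y) hxy)
  have := h1.trans h
  rwa [ENNReal.ofReal_le_ofReal_iff hr] at this

lemma qi_of_corDis_le {X Y : Type*} [MetricSpace X] [MetricSpace Y]
    {R : Set (X × Y)} (hR : IsCorrespondence R) {r : ℝ} (hr : 0 < r)
    (h : corDis R ≤ ENNReal.ofReal r) : QuasiIsometric X Y (1 + r) r r := by
  choose f hf using hR.1
  choose g hg using hR.2
  have h1r : (0:ℝ) < 1 + r := by linarith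
  have hdiv : 1 / (1 + r) ≤ 1 := by
    rw [div_le_one h1r]; linarith
  refine ⟨f, g, ?_, ?_, ?_, ?_⟩
  · intro x x'
    have hb := corDis_bound hr.le h (hf x) (hf x')
    rw [abs_le] at hb
    constructor
    · have : (1 / (1 + r)) * dist x x' ≤ 1 * dist x x' :=
        mul_le_mul_of_nonneg_right hdiv dist_nonneg
      linarith
    · nlinarith [dist_nonneg (x := x) (y := x')]
  · intro y y'
    have hb := corDis_bound hr.le h (hg y) (hg y')
    rw [abs_le] at hb
    constructor
    · have : (1 / (1 + r)) * dist y y' ≤ 1 * dist y y' :=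
        mul_le_mul_of_nonneg_right hdiv dist_nonneg
      linarith
    · nlinarith [dist_nonneg (x := y) (y := y')]
  · intro x
    have hb := corDis_bound hr.le h (hf x) (hg (f x))
    rw [abs_le] at hb
    have := dist_comm x (g (f x))
    simp only [dist_self] at hb
    linarith [hb.2]
  · intro y
    have hb3 := corDis_bound hr.le h (hg y) (hf (g y))
    rw [abs_le] at hb3
    simp only [dist_self] at hb3
    have := dist_comm y (f (g y))
    linarith [hb3.1]

lemma qiDist_le_corDis {X Y : Type*} [MetricSpace X] [MetricSpace Y]
    {R : Set (X × Y)} (hR : IsCorrespondence R) : qiDist X Y ≤ corDis R := by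
  refine ENNReal.le_of_forall_pos_le_add fun ε hε hfin => ?_
  set D := (corDis R).toReal with hD
  have hD0 : 0 ≤ D := ENNReal.toReal_nonneg
  have hr : (0:ℝ) < D + ε := by positivity
  have hle : corDis R ≤ ENNReal.ofReal (D + ε) := by
    rw [ENNReal.ofReal_add hD0 ε.coe_nonneg, ENNReal.ofReal_toReal hfin.ne]
    exact le_self_add
  have hqi := qi_of_corDis_le hR hr hle
  have : qiDist X Y ≤ ENNReal.ofReal (D + ε) :=
    sInf_le ⟨D + ε, hr, rfl, hqi⟩
  calc qiDist X Y ≤ ENNReal.ofReal (D + ε) := this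
    _ = corDis R + ENNReal.ofReal ε := by
        rw [ENNReal.ofReal_add hD0 ε.coe_nonneg, ENNReal.ofReal_toReal hfin.ne]
    _ = corDis R + ε := by rw [ENNReal.ofReal_coe_nnreal]

/-- The quasi-isometric distance is at most four times the Gromov–Hausdorff distance. -/
theorem qiDist_le_four_mul_ghDist
    (X Y : Type*) [MetricSpace X] [MetricSpace Y] [Nonempty X] [Nonempty Y] :
    qiDist X Y ≤ 4 * ghDist X Y := by
  have h1 : qiDist X Y ≤ ⨅ R : {R : Set (X × Y) // IsCorrespondence R}, corDis R.1 :=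
    le_iInf fun R => qiDist_le_corDis R.2
  calc qiDist X Y ≤ ⨅ R : {R : Set (X × Y) // IsCorrespondence R}, corDis R.1 := h1
    _ ≤ 2 * ⨅ R : {R : Set (X × Y) // IsCorrespondence R}, corDis R.1 := by
        nth_rewrite 1 [← one_mul (⨅ R : {R : Set (X × Y) // IsCorrespondence R}, corDis R.1)]
        exact mul_le_mul_left one_le_two _
    _ = 4 * ghDist X Y := by
        rw [ghDist, ← mul_assoc]
        congr 1
        rw [one_div, show (4:ℝ≥0∞) = 2 * 2 by norm_num, mul_assoc,
          ENNReal.mul_inv_cancel two_ne_zero ENNReal.ofNat_ne_top, mul_one]
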